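/- Let k be a field, L a field extension of k, K a k-algebra automorphism of L, and q ∈ kˣ. Let w₁, w₂ ∈ L satisfy K(w₁) = q²·w₁ and K(w₂) = q⁻²·w₂, and define X_i : L → L by X_i(a) = w_i·(a − K(a)) for i = 1, 2. Then for all a ∈ L: q²·X₁(X₂(a)) − X₂(X₁(a)) = (q² − 1)·w₁w₂·(a − K(K(a))). In particular, if q² ≠ 1 and w₁·w₂ = −q·(q² − 1)⁻², then q²·X₁(X₂(a)) − X₂(X₁(a)) = (q − q⁻¹)⁻¹·(K(K(a)) − a) for all a ∈ L. -/

import Mathlib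

/-- Example 3.7 computation for `u_q(sl₂)`:
`q²X₁X₂ − X₂X₁ = (q²−1)w₁w₂(1 − K²)`, and with `w₁w₂ = −q(q²−1)⁻²` this equals
`(q − q⁻¹)⁻¹(K² − 1)`. -/
theorem stmt_11 (k L : Type*) [Field k] [Field L] [Algebra k L]
    (K : L ≃ₐ[k] L) (q : k) (hq : q ≠ 0)
    (w₁ w₂ : L)
    (h₁ : K w₁ = algebraMap k L (q ^ 2) * w₁)
    (h₂ : K w₂ = algebraMap k L ((q ^ 2)⁻¹) * w₂)
    (X₁ X₂ : L → L)
    (hX₁ : ∀ a : L, X₁ a = w₁ * (a - K a))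
    (hX₂ : ∀ a : L, X₂ a = w₂ * (a - K a)) :
    (∀ a : L,
      algebraMap k L (q ^ 2) * X₁ (X₂ a) - X₂ (X₁ a) =
        algebraMap k L (q ^ 2 - 1) * (w₁ * w₂ * (a - K (K a)))) ∧
    (q ^ 2 ≠ 1 → w₁ * w₂ = algebraMap k L (-q * ((q ^ 2 - 1) ^ 2)⁻¹) →
      ∀ a : L,
        algebraMap k L (q ^ 2) * X₁ (X₂ a) - X₂ (X₁ a) =
          algebraMap k L ((q - q⁻¹)⁻¹) * (K (K a) - a)) := by
  have hQ : algebraMap k L q ≠ 0 := by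
    simpa using (map_ne_zero (algebraMap k L)).mpr hq
  have main : ∀ a : L,
      algebraMap k L (q ^ 2) * X₁ (X₂ a) - X₂ (X₁ a) =
        algebraMap k L (q ^ 2 - 1) * (w₁ * w₂ * (a - K (K a))) := by
    intro a
    simp only [hX₁, hX₂, map_mul, map_sub, h₁, h₂, map_pow, map_inv₀, map_one]
    field_simp
    ring
  refine ⟨main, fun hq1 hw a => ?_⟩
  rw [main a, hw]
  have hq1' : q ^ 2 - 1 ≠ 0 := sub_ne_zero.mpr hq1
  have hd : q - q⁻¹ = (q ^ 2 - 1) * q⁻¹ := by field_simp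
  have h3 : q - q⁻¹ ≠ 0 := by rw [hd]; exact mul_ne_zero hq1' (inv_ne_zero hq)
  have hc : (q ^ 2 - 1) * (-q * ((q ^ 2 - 1) ^ 2)⁻¹) = -(q - q⁻¹)⁻¹ := by
    rw [hd, mul_inv, inv_inv]
    field_simp
  rw [← mul_assoc, ← map_mul, hc, map_neg]
  ring
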